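/- In the hypergraph H_G (as constructed from a graph G with n vertices and m edges), the ordering that selects b_1, b_2, b_3 first has effective coverages r(1) = r(2) = r(3) = 2^n - 1 - C(n,2) + m, r(i) = 0 for i >= 4, and total cost 6*(2^n - 1 - C(n,2) + m). -/

import Mathlib

open Finset


noncomputable def toPair {n : ℕ} : Sym2 (Fin n) → Finset (Fin n) :=
  Sym2.lift ⟨fun i j => {i, j}, fun i j => Finset.pair_comm i j⟩

@[simp] lemma toPair_mk {n : ℕ} (i j : Fin n) : toPair (s(i, j)) = {i, j} := rfl

lemma pair_eq_sym2 {n : ℕ} {a b c d : Fin n} (hab : a ≠ b)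
    (h : ({a, b} : Finset (Fin n)) = {c, d}) : s(a, b) = s(c, d) := by
  have ha : a = c ∨ a = d := by
    have : a ∈ ({c, d} : Finset (Fin n)) := h ▸ (by simp)
    simpa using this
  have hb : b = c ∨ b = d := by
    have : b ∈ ({c, d} : Finset (Fin n)) := h ▸ (by simp)
    simpa using this
  rcases ha with rfl | rfl
  · rcases hb with rfl | rfl
    · exact absurd rfl hab
    · rfl
  · rcases hb with rfl | rfl
    · exact Sym2.eq_swap
    · exact absurd rfl hab


/-- Position at which hyperedge `e` is first hit by the ordering `σ`. -/
noncomputable def firstHit {α : Type*} (σ : α → ℕ) (e : Finset α) : ℕ :=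
  sInf (σ '' ↑e)

/-- Total cost of an ordering: each edge pays the position of its first vertex. -/
noncomputable def totalCost {α : Type*} (E : Finset (Finset α)) (σ : α → ℕ) : ℕ :=
  ∑ e ∈ E, firstHit σ e

open scoped Classical in
/-- Effective coverage of position `i`: the number of edges first hit at `i`. -/
noncomputable def coverage {α : Type*} (E : Finset (Finset α)) (σ : α → ℕ) (i : ℕ) : ℕ :=
  (E.filter fun e => firstHit σ e = i).card

/-- An ordering of the vertex set `V`: a bijection onto positions `{1, ..., |V|}`. -/
def IsOrdering {α : Type*} (V : Finset α) (σ : α → ℕ) : Prop :=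
  Set.BijOn σ ↑V (Set.Icc 1 V.card)


/-- The edge set of the hypergraph `H_G` associated with a graph `G` on `Fin n`:
vertices are `A ∪ B` with `A = V(G)` (embedded by `Sum.inl`) and `B = {b₁, b₂, b₃}`
(embedded by `Sum.inr`); edges are `{vᵢ, b_k}`, `{vᵢ, vⱼ, b_k}` for `vᵢvⱼ ∈ E(G)`,
and `X ∪ {b_k}` for `X ⊆ A` with `|X| ≥ 3`. -/
def IsHG {n : ℕ} (G : SimpleGraph (Fin n)) (E : Finset (Finset (Fin n ⊕ Fin 3))) : Prop :=
  ∀ e : Finset (Fin n ⊕ Fin 3),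
    e ∈ E ↔
      (∃ (i : Fin n) (k : Fin 3), e = {Sum.inl i, Sum.inr k}) ∨
      (∃ (i j : Fin n) (k : Fin 3), G.Adj i j ∧ e = {Sum.inl i, Sum.inl j, Sum.inr k}) ∨
      (∃ X : Finset (Fin n), 3 ≤ X.card ∧ ∃ k : Fin 3, e = X.image Sum.inl ∪ {Sum.inr k})

lemma count_lemma {n : ℕ} (hn : 3 ≤ n) (G : SimpleGraph (Fin n)) [DecidableRel G.Adj]
    (E : Finset (Finset (Fin n ⊕ Fin 3))) (hHG : IsHG G E) (k : Fin 3) :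
    (E.filter fun e => Sum.inr k ∈ e).card
      = 2 ^ n - 1 - n.choose 2 + G.edgeFinset.card := by
  classical
  set S₁ : Finset (Finset (Fin n)) := (univ : Finset (Fin n)).powersetCard 1 with hS₁
  set S₂ : Finset (Finset (Fin n)) := G.edgeFinset.image toPair with hS₂
  set S₃ : Finset (Finset (Fin n)) :=
    (univ : Finset (Fin n)).powerset.filter (fun X => 3 ≤ X.card) with hS₃
  set f : Finset (Fin n) → Finset (Fin n ⊕ Fin 3) :=
    fun X => X.image Sum.inl ∪ {Sum.inr k} with hf
  have hfinj : Function.Injective f := by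
    intro X Y h
    ext i
    have := Finset.ext_iff.1 h (Sum.inl i)
    simpa [hf] using this
  -- membership characterization of S₂
  have hkey : ∀ e : Sym2 (Fin n), e ∈ G.edgeFinset → ∃ i j, G.Adj i j ∧ toPair e = {i, j} := by
    intro e
    induction e using Sym2.ind with
    | _ i j =>
      intro he
      exact ⟨i, j, by simpa [SimpleGraph.mem_edgeFinset] using he, by simp⟩
  have hmemS₂ : ∀ X : Finset (Fin n), X ∈ S₂ ↔ ∃ i j, G.Adj i j ∧ X = {i, j} := by
    intro X
    constructor
    · intro hX
      obtain ⟨e, he, hXe⟩ := mem_image.1 hX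
      obtain ⟨i, j, hadj, hpair⟩ := hkey e he
      exact ⟨i, j, hadj, hXe ▸ hpair ▸ rfl⟩
    · rintro ⟨i, j, hadj, rfl⟩
      exact mem_image.2 ⟨s(i, j), by simpa [SimpleGraph.mem_edgeFinset] using hadj, by simp⟩
  have hcard1 : ∀ X ∈ S₁, X.card = 1 := fun X hX => (mem_powersetCard.1 hX).2
  have hcard2 : ∀ X ∈ S₂, X.card = 2 := by
    intro X hX
    obtain ⟨i, j, hadj, rfl⟩ := (hmemS₂ X).1 hX
    exact card_pair (G.ne_of_adj hadj)
  have hcard3 : ∀ X ∈ S₃, 3 ≤ X.card := fun X hX => (mem_filter.1 hX).2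
  -- the filter is the image of the union
  have hEk : E.filter (fun e => Sum.inr k ∈ e) = (S₁ ∪ S₂ ∪ S₃).image f := by
    ext e
    simp only [mem_filter, mem_image, mem_union]
    constructor
    · rintro ⟨he, hke⟩
      rcases (hHG e).1 he with ⟨i, k₀, rfl⟩ | ⟨i, j, k₀, hadj, rfl⟩ | ⟨X, hX, k₀, rfl⟩
      · have hk : k = k₀ := by simpa using hke
        subst hk
        refine ⟨{i}, Or.inl (Or.inl (by simp [hS₁])), ?_⟩
        ext x; simp [hf]; tauto
      · have hk : k = k₀ := by simpa using hke
        subst hk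
        refine ⟨{i, j}, Or.inl (Or.inr ((hmemS₂ _).2 ⟨i, j, hadj, rfl⟩)), ?_⟩
        ext x; simp [hf]; tauto
      · have hk : k = k₀ := by simpa using hke
        subst hk
        exact ⟨X, Or.inr (by simp [hS₃, hX]), rfl⟩
    · rintro ⟨X, hX | hX, rfl⟩
      · rcases hX with hX | hX
        · obtain ⟨i, rfl⟩ := Finset.card_eq_one.1 (hcard1 X hX)
          refine ⟨(hHG _).2 (Or.inl ⟨i, k, by ext x; simp [hf]; tauto⟩), by simp [hf]⟩
        · obtain ⟨i, j, hadj, rfl⟩ := (hmemS₂ X).1 hX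
          refine ⟨(hHG _).2 (Or.inr (Or.inl ⟨i, j, k, hadj, by ext x; simp [hf]; tauto⟩)), by simp [hf]⟩
      · refine ⟨(hHG _).2 (Or.inr (Or.inr ⟨X, hcard3 X hX, k, rfl⟩)), by simp [hf]⟩
  -- disjointness
  have hd12 : Disjoint S₁ S₂ := by
    rw [Finset.disjoint_left]
    intro X h1 h2
    have := hcard1 X h1
    have := hcard2 X h2
    omega
  have hd3 : Disjoint (S₁ ∪ S₂) S₃ := by
    rw [Finset.disjoint_left]
    intro X h12 h3
    have := hcard3 X h3
    rcases mem_union.1 h12 with h | h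
    · have := hcard1 X h; omega
    · have := hcard2 X h; omega
  -- cards
  have hc1 : S₁.card = n := by
    simp [hS₁, card_powersetCard]
  have hc2 : S₂.card = G.edgeFinset.card := by
    rw [hS₂]
    have hinj2 : ∀ e1 e2 : Sym2 (Fin n), ¬ e1.IsDiag → toPair e1 = toPair e2 → e1 = e2 := by
      intro e1 e2
      induction e1 using Sym2.ind with
      | _ a b =>
        induction e2 using Sym2.ind with
        | _ c d =>
          intro hd h
          exact pair_eq_sym2 (by simpa using hd) (by simpa using h)
    apply card_image_of_injOn
    intro e1 h1 e2 _ hpq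
    refine hinj2 e1 e2 ?_ hpq
    exact (SimpleGraph.not_isDiag_of_mem_edgeSet G (by simpa [SimpleGraph.mem_edgeFinset] using h1))
  have hsum3 : ∑ j ∈ range 3, n.choose j = 1 + n + n.choose 2 := by
    simp [Finset.sum_range_succ]
  have hbound : 1 + n + n.choose 2 ≤ 2 ^ n := by
    rw [← hsum3, ← Nat.sum_range_choose n]
    apply Finset.sum_le_sum_of_subset
    exact Finset.range_subset_range.2 (by omega)
  have hc3 : S₃.card = 2 ^ n - (1 + n + n.choose 2) := by
    have hsplit := Finset.card_filter_add_card_filter_not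
      (s := (univ : Finset (Fin n)).powerset) (p := fun X => X.card ≤ 2)
    have heq : S₃ = (univ : Finset (Fin n)).powerset.filter (fun X => ¬ X.card ≤ 2) := by
      apply filter_congr
      intro X _
      constructor <;> intro h <;> omega
    have hpow : ((univ : Finset (Fin n)).powerset).card = 2 ^ n := by
      simp [card_powerset]
    have hle2 : ((univ : Finset (Fin n)).powerset.filter (fun X => X.card ≤ 2)).card
        = 1 + n + n.choose 2 := by
      have hbi : (univ : Finset (Fin n)).powerset.filter (fun X => X.card ≤ 2)
          = (range 3).biUnion (fun j => (univ : Finset (Fin n)).powersetCard j) := by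
        ext X
        simp only [mem_filter, mem_powerset, mem_biUnion, mem_range, mem_powersetCard]
        constructor
        · rintro ⟨hs, hc⟩
          exact ⟨X.card, by omega, hs, rfl⟩
        · rintro ⟨j, hj, hs, rfl⟩
          exact ⟨hs, by omega⟩
      rw [hbi, card_biUnion, ← hsum3]
      · apply Finset.sum_congr rfl
        intro j _
        simp [card_powersetCard]
      · intro x _ y _ hxy
        rw [Function.onFun, Finset.disjoint_left]
        intro X hX hY
        exact hxy ((mem_powersetCard.1 hX).2.symm.trans (mem_powersetCard.1 hY).2)
    calc S₃.card = ((univ : Finset (Fin n)).powerset).card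
        - ((univ : Finset (Fin n)).powerset.filter (fun X => X.card ≤ 2)).card := by
          rw [heq]
          omega
      _ = 2 ^ n - (1 + n + n.choose 2) := by rw [hpow, hle2]
  rw [hEk, card_image_of_injective _ hfinj, card_union_of_disjoint hd3,
    card_union_of_disjoint hd12, hc1, hc2, hc3]
  have hgoal : ∀ P C m : ℕ, 1 + n + C ≤ P →
      n + m + (P - (1 + n + C)) = P - 1 - C + m := by
    intro P C m h
    omega
  exact hgoal _ _ _ hbound

/-- In `H_G` (with `|V(G)| = n` and `|E(G)| = m`), any ordering that places
`b₁, b₂, b₃` at positions `1, 2, 3` has effective coverages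
`r(1) = r(2) = r(3) = 2ⁿ - 1 - C(n,2) + m`, `r(i) = 0` for `i ≥ 4`, and total cost
`6 (2ⁿ - 1 - C(n,2) + m)`. -/
theorem stmt_11 (n : ℕ) (hn : 3 ≤ n) (G : SimpleGraph (Fin n)) [DecidableRel G.Adj]
    (E : Finset (Finset (Fin n ⊕ Fin 3))) (hHG : IsHG G E)
    (σ : Fin n ⊕ Fin 3 → ℕ) (hσ : IsOrdering Finset.univ σ)
    (hB : ∀ k : Fin 3, σ (Sum.inr k) = (k : ℕ) + 1) :
    (∀ i, 1 ≤ i → i ≤ 3 →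
      coverage E σ i = 2 ^ n - 1 - n.choose 2 + G.edgeFinset.card) ∧
    (∀ i, 4 ≤ i → coverage E σ i = 0) ∧
    totalCost E σ = 6 * (2 ^ n - 1 - n.choose 2 + G.edgeFinset.card) := by
  classical
  obtain ⟨hmaps, hinj', hsurj⟩ := hσ
  have hinj : Function.Injective σ := fun x y h => hinj' (by simp) (by simp) h
  have hA : ∀ i : Fin n, 4 ≤ σ (Sum.inl i) := by
    intro i
    have h1 : σ (Sum.inl i) ∈ Set.Icc 1 (univ : Finset (Fin n ⊕ Fin 3)).card :=
      hmaps (by simp)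
    obtain ⟨hl, _⟩ := h1
    by_contra h
    push_neg at h
    have hval : σ (Sum.inr (⟨σ (Sum.inl i) - 1, by omega⟩ : Fin 3)) = σ (Sum.inl i) := by
      rw [hB]
      show σ (Sum.inl i) - 1 + 1 = σ (Sum.inl i)
      omega
    have := hinj hval
    simp at this
  have huniq : ∀ e ∈ E, ∀ k k' : Fin 3, Sum.inr k ∈ e → Sum.inr k' ∈ e → k = k' := by
    intro e he k k' hk hk'
    rcases (hHG e).1 he with ⟨i, k₀, rfl⟩ | ⟨i, j, k₀, hadj, rfl⟩ | ⟨X, hX, k₀, rfl⟩ <;>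
      simp_all
  have hex : ∀ e ∈ E, ∃ k : Fin 3, Sum.inr k ∈ e := by
    intro e he
    rcases (hHG e).1 he with ⟨i, k₀, rfl⟩ | ⟨i, j, k₀, hadj, rfl⟩ | ⟨X, hX, k₀, rfl⟩ <;>
      exact ⟨k₀, by simp⟩
  have hfh : ∀ e ∈ E, ∀ k : Fin 3, Sum.inr k ∈ e → firstHit σ e = (k : ℕ) + 1 := by
    intro e he k hk
    have hk3 : (k : ℕ) < 3 := k.isLt
    apply le_antisymm
    · exact Nat.sInf_le ⟨Sum.inr k, by simpa using hk, hB k⟩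
    · refine le_csInf ⟨σ (Sum.inr k), ⟨Sum.inr k, by simpa using hk, rfl⟩⟩ ?_
      rintro b ⟨x, hx, rfl⟩
      cases x with
      | inl i => have := hA i; omega
      | inr k' =>
        have hkk : k' = k := huniq e he k' k (by simpa using hx) hk
        subst hkk
        rw [hB]
  have hfilter : ∀ k : Fin 3, (E.filter fun e => firstHit σ e = (k : ℕ) + 1)
      = E.filter fun e => Sum.inr k ∈ e := by
    intro k
    ext e
    simp only [mem_filter]
    constructor
    · rintro ⟨he, hfe⟩
      obtain ⟨k', hk'⟩ := hex e he
      have hk'' := hfh e he k' hk'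
      have hkk : k' = k := Fin.ext (by omega)
      exact ⟨he, hkk ▸ hk'⟩
    · rintro ⟨he, hke⟩
      exact ⟨he, hfh e he k hke⟩
  have hcard' : ∀ k : Fin 3, (E.filter fun e => firstHit σ e = (k : ℕ) + 1).card
      = 2 ^ n - 1 - n.choose 2 + G.edgeFinset.card := by
    intro k
    rw [hfilter k]
    exact count_lemma hn G E hHG k
  have hcovk : ∀ k : Fin 3, coverage E σ ((k : ℕ) + 1)
      = 2 ^ n - 1 - n.choose 2 + G.edgeFinset.card := by
    intro k
    unfold coverage
    rw [Finset.filter_congr_decidable]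
    exact hcard' k
  refine ⟨?_, ?_, ?_⟩
  · intro i h1 h3
    interval_cases i
    · simpa using hcovk 0
    · simpa using hcovk 1
    · simpa using hcovk 2
  · intro i hi
    unfold coverage
    rw [Finset.filter_congr_decidable, Finset.card_eq_zero, Finset.filter_eq_empty_iff]
    intro e he
    obtain ⟨k, hk⟩ := hex e he
    have := hfh e he k hk
    have := k.isLt
    omega
  · have hmapsto : ∀ e ∈ E, firstHit σ e ∈ ({1, 2, 3} : Finset ℕ) := by
      intro e he
      obtain ⟨k, hk⟩ := hex e he
      rw [hfh e he k hk]
      have := k.isLt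
      simp only [mem_insert, mem_singleton]
      omega
    have e1 : (E.filter fun e => firstHit σ e = 1).card
        = 2 ^ n - 1 - n.choose 2 + G.edgeFinset.card := by simpa using hcard' 0
    have e2 : (E.filter fun e => firstHit σ e = 2).card
        = 2 ^ n - 1 - n.choose 2 + G.edgeFinset.card := by simpa using hcard' 1
    have e3 : (E.filter fun e => firstHit σ e = 3).card
        = 2 ^ n - 1 - n.choose 2 + G.edgeFinset.card := by simpa using hcard' 2
    calc totalCost E σ
        = ∑ i ∈ ({1, 2, 3} : Finset ℕ),
            ∑ e ∈ E.filter (fun e => firstHit σ e = i), firstHit σ e :=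
          (Finset.sum_fiberwise_of_maps_to hmapsto _).symm
      _ = ∑ i ∈ ({1, 2, 3} : Finset ℕ),
            (E.filter (fun e => firstHit σ e = i)).card * i := by
          refine Finset.sum_congr rfl fun i _ => ?_
          rw [Finset.sum_congr rfl fun e he => (mem_filter.1 he).2, Finset.sum_const,
            smul_eq_mul]
      _ = 6 * (2 ^ n - 1 - n.choose 2 + G.edgeFinset.card) := by
          rw [Finset.sum_insert (by decide), Finset.sum_insert (by decide),
            Finset.sum_singleton, e1, e2, e3]
          ring
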